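/- Every smooth solution F : (0, r₀) → ℝ of the ordinary differential equation F(r)·(F(r) − r·F'(r)) = c for a positive constant c, with F positive, is of the form F(r) = √(c + K r²) for some real constant K. -/

import Mathlib

/-- Every positive differentiable solution `F` of `F(r)·(F(r) − r·F'(r)) = c`
on `(0, r₀)`, with `c > 0`, is of the form `F(r) = √(c + K r²)` for some real
constant `K` (with `c + K r² > 0` on the interval). -/
theorem translation_generator_ODE_solution (c r₀ : ℝ) (hc : 0 < c) (F : ℝ → ℝ)
    (hFd : ∀ r ∈ Set.Ioo (0:ℝ) r₀, DifferentiableAt ℝ F r)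
    (hFpos : ∀ r ∈ Set.Ioo (0:ℝ) r₀, 0 < F r)
    (heq : ∀ r ∈ Set.Ioo (0:ℝ) r₀, F r * (F r - r * deriv F r) = c) :
    ∃ K : ℝ, ∀ r ∈ Set.Ioo (0:ℝ) r₀,
      0 < c + K * r ^ 2 ∧ F r = Real.sqrt (c + K * r ^ 2) := by
  by_cases hr₀ : r₀ ≤ 0
  · exact ⟨0, fun r hr => absurd (hr.1.trans hr.2) (by linarith)⟩
  push_neg at hr₀
  set s := Set.Ioo (0:ℝ) r₀ with hs
  set G : ℝ → ℝ := fun r => (F r ^ 2 - c) / r ^ 2 with hGdef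
  have hG : ∀ r ∈ s, HasDerivAt G 0 r := by
    intro r hr
    have hr0 : r ≠ 0 := ne_of_gt hr.1
    have hF := (hFd r hr).hasDerivAt
    have h1 : HasDerivAt (fun r => F r ^ 2 - c) (2 * F r * deriv F r) r := by
      have := (hF.pow 2).sub_const c
      simpa using this
    have h2 : HasDerivAt (fun r : ℝ => r ^ 2) (2 * r) r := by
      simpa using hasDerivAt_pow 2 r
    have h3 := h1.div h2 (pow_ne_zero 2 hr0)
    refine (h3.congr_deriv (Eq.symm ?_) : HasDerivAt G 0 r)
    rw [eq_comm, div_eq_zero_iff]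
    left
    linear_combination (-2*r) * heq r hr
  have hconv : Convex ℝ s := convex_Ioo 0 r₀
  have hdiff : DifferentiableOn ℝ G s := fun x hx =>
    ((hG x hx).differentiableAt).differentiableWithinAt
  have hfder : ∀ x ∈ s, fderivWithin ℝ G s x = 0 := fun x hx => by
    rw [(hG x hx).hasFDerivAt.hasFDerivWithinAt.fderivWithin
      (isOpen_Ioo.uniqueDiffWithinAt hx)]
    ext
    simp
  have hmid : r₀ / 2 ∈ s := ⟨by linarith, by linarith⟩
  refine ⟨G (r₀ / 2), fun r hr => ?_⟩
  have hGr : G r = G (r₀ / 2) :=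
    hconv.is_const_of_fderivWithin_eq_zero hdiff hfder hr hmid
  have hr0 : r ≠ 0 := ne_of_gt hr.1
  have hsq : F r ^ 2 = c + G (r₀ / 2) * r ^ 2 := by
    have : (F r ^ 2 - c) / r ^ 2 = G (r₀ / 2) := hGr
    field_simp at this
    linarith
  have hpos : 0 < c + G (r₀ / 2) * r ^ 2 := by
    rw [← hsq]; exact pow_pos (hFpos r hr) 2
  refine ⟨hpos, ?_⟩
  rw [← hsq, Real.sqrt_sq (hFpos r hr).le]
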